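/- Under the hypotheses on V, W, q, V⁺ (ker V = span{1_N}, W of full column rank, qᵀW = 0, qᵀ1_N = 1, V⁺ := W(VW)⁻¹), let τ ∈ ℝ, A := !![1, τ; 0, 1], β := ![τ²/2, τ] (a 2×1 matrix), M ≥ 1, J := [0_{(N−M)×M}; I_M] ∈ Matrix (Fin N) (Fin M) ℝ, and let 𝒜 := [[A⊗I_N, β⊗J], [0_{M×2N}, I_M]] be the (2N+M)×(2N+M) ensemble state matrix. With T and T⁻¹ the transformation matrices of the observable canonical decomposition, one has T·𝒜·T⁻¹ = [[A⊗I_{N−1}, β⊗(VJ), 0_{2(N−1)×2}], [0_{M×2(N−1)}, I_M, 0_{M×2}], [0_{2×2(N−1)}, β⊗(qᵀJ), A]]. -/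

import Mathlib

open Matrix Kronecker


private lemma mul_submatrix_id {l m n o : Type*} [Fintype m]
    (X : Matrix l m ℝ) (Y : Matrix m n ℝ) (e : o → n) :
    X * Y.submatrix id e = (X * Y).submatrix id e := by
  ext i j; simp [Matrix.mul_apply]

private lemma fromColumns_add' {m n₁ n₂ : Type*}
    (A C : Matrix m n₁ ℝ) (B D : Matrix m n₂ ℝ) :
    Matrix.fromCols A B + Matrix.fromCols C D
      = Matrix.fromCols (A + C) (B + D) := by
  ext i (j | j) <;> simp

private lemma kron_one_fin1 (A : Matrix (Fin 2) (Fin 2) ℝ) :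
    A ⊗ₖ (1 : Matrix (Fin 1) (Fin 1) ℝ) = A.submatrix Prod.fst Prod.fst := by
  ext ⟨i, a⟩ ⟨j, b⟩
  simp [Matrix.one_apply, Subsingleton.elim a b]

/-- Equation (13) of the paper: the transformed state matrix `T 𝒜 T⁻¹` of the mixed clock
ensemble is in lower block-triangular (observable canonical) form. -/
theorem stmt_8 (N M : ℕ) (hN : 2 ≤ N) (hM : 1 ≤ M) (τ : ℝ)
    (V : Matrix (Fin (N-1)) (Fin N) ℝ)
    (hV : LinearMap.ker V.mulVecLin = Submodule.span ℝ {(fun _ => 1 : Fin N → ℝ)})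
    (W : Matrix (Fin N) (Fin (N-1)) ℝ)
    (hW : LinearIndependent ℝ (fun j : Fin (N-1) => fun i : Fin N => W i j))
    (q : Fin N → ℝ) (hqW : Matrix.vecMul q W = 0)
    (hq1 : q ⬝ᵥ (fun _ => 1) = 1)
    (Vplus : Matrix (Fin N) (Fin (N-1)) ℝ) (hVplus : Vplus = W * (V * W)⁻¹)
    (qrow : Matrix (Fin 1) (Fin N) ℝ) (hqrow : qrow = Matrix.of (fun _ j => q j))
    (onecol : Matrix (Fin N) (Fin 1) ℝ) (honecol : onecol = Matrix.of (fun _ _ => 1))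
    (A : Matrix (Fin 2) (Fin 2) ℝ) (hA : A = !![1, τ; 0, 1])
    (β : Matrix (Fin 2) (Fin 1) ℝ) (hβ : β = !![τ^2/2; τ])
    (J : Matrix (Fin N) (Fin M) ℝ)
    (hJ : J = Matrix.of (fun i j => if i.val = N - M + j.val then 1 else 0))
    (T : Matrix (((Fin 2 × Fin (N-1)) ⊕ Fin M) ⊕ (Fin 2 × Fin 1))
        ((Fin 2 × Fin N) ⊕ Fin M) ℝ)
    (hT : T = Matrix.fromRows
      (Matrix.fromRows
        (Matrix.fromCols ((1 : Matrix (Fin 2) (Fin 2) ℝ) ⊗ₖ V) 0)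
        (Matrix.fromCols 0 (1 : Matrix (Fin M) (Fin M) ℝ)))
      (Matrix.fromCols ((1 : Matrix (Fin 2) (Fin 2) ℝ) ⊗ₖ qrow) 0))
    (Tinv : Matrix ((Fin 2 × Fin N) ⊕ Fin M)
        (((Fin 2 × Fin (N-1)) ⊕ Fin M) ⊕ (Fin 2 × Fin 1)) ℝ)
    (hTinv : Tinv = Matrix.fromRows
      (Matrix.fromCols
        (Matrix.fromCols ((1 : Matrix (Fin 2) (Fin 2) ℝ) ⊗ₖ Vplus) 0)
        ((1 : Matrix (Fin 2) (Fin 2) ℝ) ⊗ₖ onecol))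
      (Matrix.fromCols (Matrix.fromCols 0 (1 : Matrix (Fin M) (Fin M) ℝ)) 0))
    (𝒜 : Matrix ((Fin 2 × Fin N) ⊕ Fin M) ((Fin 2 × Fin N) ⊕ Fin M) ℝ)
    (h𝒜 : 𝒜 = Matrix.fromBlocks
      (A ⊗ₖ (1 : Matrix (Fin N) (Fin N) ℝ))
      ((β ⊗ₖ J).submatrix id (fun j : Fin M => ((0 : Fin 1), j)))
      0 (1 : Matrix (Fin M) (Fin M) ℝ)) :
    T * 𝒜 * Tinv = Matrix.fromBlocks
      (Matrix.fromBlocks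
        (A ⊗ₖ (1 : Matrix (Fin (N-1)) (Fin (N-1)) ℝ))
        ((β ⊗ₖ (V * J)).submatrix id (fun j : Fin M => ((0 : Fin 1), j)))
        0 (1 : Matrix (Fin M) (Fin M) ℝ))
      0
      (Matrix.fromCols 0
        ((β ⊗ₖ (qrow * J)).submatrix id (fun j : Fin M => ((0 : Fin 1), j))))
      (A.submatrix Prod.fst Prod.fst) := by

  -- invertibility of V * W
  have hdet : IsUnit (V * W).det := by
    rw [isUnit_iff_ne_zero, Ne, ← Matrix.exists_mulVec_eq_zero_iff]
    rintro ⟨v, hv0, hv⟩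
    apply hv0
    rw [← Matrix.mulVec_mulVec] at hv
    have hmem : W.mulVec v ∈ LinearMap.ker V.mulVecLin := by
      rw [LinearMap.mem_ker, Matrix.mulVecLin_apply]; exact hv
    rw [hV, Submodule.mem_span_singleton] at hmem
    obtain ⟨c, hc⟩ := hmem
    have hc0 : c = 0 := by
      have h1 : q ⬝ᵥ W.mulVec v = 0 := by
        rw [Matrix.dotProduct_mulVec, hqW, zero_dotProduct]
      rw [← hc, dotProduct_smul, hq1, smul_eq_mul, mul_one] at h1
      exact h1
    have hWv : W.mulVec v = 0 := by rw [← hc, hc0, zero_smul]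
    have hsum : ∑ j, v j • (fun i : Fin N => W i j) = 0 := by
      funext i
      have := congrFun hWv i
      simpa [Matrix.mulVec, dotProduct, Finset.sum_apply, mul_comm] using this
    have hv0' := Fintype.linearIndependent_iff.mp hW v hsum
    funext i; exact hv0' i
  -- the four structural identities
  have hVVp : V * Vplus = 1 := by
    rw [hVplus, ← Matrix.mul_assoc, Matrix.mul_nonsing_inv _ hdet]
  have h1v : V.mulVec (fun _ => 1) = 0 := by
    have : (fun _ => 1 : Fin N → ℝ) ∈ LinearMap.ker V.mulVecLin := by
      rw [hV]; exact Submodule.mem_span_singleton_self _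
    rw [LinearMap.mem_ker, Matrix.mulVecLin_apply] at this; exact this
  have hVone : V * onecol = 0 := by
    ext i j
    have := congrFun h1v i
    simp only [Matrix.mulVec, dotProduct, mul_one, Pi.zero_apply] at this
    simp [honecol, Matrix.mul_apply, this]
  have hqWm : qrow * W = 0 := by
    ext i j
    have := congrFun hqW j
    simp only [Matrix.vecMul, dotProduct, Pi.zero_apply] at this
    simp [hqrow, Matrix.mul_apply, this]
  have hqVp : qrow * Vplus = 0 := by
    rw [hVplus, ← Matrix.mul_assoc, hqWm, Matrix.zero_mul]
  have hqone : qrow * onecol = 1 := by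
    ext i j
    have h := hq1
    simp only [dotProduct, mul_one] at h
    simp [hqrow, honecol, Matrix.mul_apply, h, Matrix.one_apply, Subsingleton.elim i j]
  -- the block computation
  subst hT hTinv h𝒜
  simp only [Matrix.fromRows_mul, Matrix.fromCols_mul_fromBlocks,
    Matrix.fromCols_mul_fromRows, Matrix.mul_fromCols,
    mul_submatrix_id, ← Matrix.mul_kronecker_mul,
    Matrix.zero_mul, Matrix.mul_zero, Matrix.mul_one, Matrix.one_mul,
    add_zero, zero_add,
    hVVp, hVone, hqVp, hqone, Matrix.kronecker_zero, kron_one_fin1,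
    fromColumns_add', Matrix.fromCols_zero]
  ext i j
  rcases i with (i | i) <;> rcases j with ((j | j) | j) <;>
    [skip; skip; skip; simp;
     simp;
     simp] <;>
  rcases i with (i | i) <;>
    simp
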